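/- arXiv:1402.0317 — 5 statements merged into one kernel-verified Lean document; each statement's English description precedes it below -/
import Mathlib

section
/- The torsion T* of the Chern connection is given by: T*(hX,hY) = ℜ(X,Y), T*(hX,JY) = C'(X,Y), and T*(JX,JY) = 0. -/
/-- Abstract Klein–Grifone setting: the Lie algebra of vector fields on the tangent
bundle `TM` of a manifold `M`, regarded as a module over the smooth functions on `TM`,
together with the natural almost-tangent structure `J`, the Liouville (canonical)
vector field `C`, and the directional-derivative action of vector fields on functions. -/
structure KGSetting where
  /-- vector fields on TM -/
  VF : Type
  /-- smooth functions on TM -/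
  Fn : Type
  [vfLie : LieRing VF]
  [vfAlg : LieAlgebra ℝ VF]
  [fnRing : CommRing Fn]
  [fnAlg : Algebra ℝ Fn]
  [fnModVF : Module Fn VF]
  /-- the directional derivative `X.f` of a function along a vector field -/
  der : VF →ₗ[ℝ] Fn →ₗ[ℝ] Fn
  der_mul : ∀ (X : VF) (f g : Fn), der X (f * g) = der X f * g + f * der X g
  /-- Leibniz rule for the Lie bracket and the `Fn`-module structure -/
  bracket_smul : ∀ (X : VF) (f : Fn) (Y : VF), ⁅X, f • Y⁆ = der X f • Y + f • ⁅X, Y⁆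
  /-- the natural almost-tangent structure -/
  J : VF →ₗ[ℝ] VF
  /-- the Liouville (canonical) vector field -/
  Liouville : VF
  /-- J² = 0 -/
  J_sq : ∀ (X : VF), J (J X) = 0
  /-- the Frölicher–Nijenhuis bracket [J,J] vanishes -/
  JJ : ∀ (X Y : VF), ⁅J X, J Y⁆ = J ⁅J X, Y⁆ + J ⁅X, J Y⁆
  /-- the Frölicher–Nijenhuis bracket [C,J] equals -J -/
  CJ : ∀ (X : VF), ⁅Liouville, J X⁆ = J ⁅Liouville, X⁆ - J X
  /-- the Liouville vector field is vertical -/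
  J_Liouville : J Liouville = 0

attribute [instance] KGSetting.vfLie KGSetting.vfAlg KGSetting.fnRing
  KGSetting.fnAlg KGSetting.fnModVF

/-- A linear connection on `TM` in the Klein–Grifone setting. -/
structure LinConn (K : KGSetting) where
  /-- the covariant derivative `D X Y = ∇_X Y` -/
  D : K.VF → K.VF → K.VF
  addX : ∀ X X' Y, D (X + X') Y = D X Y + D X' Y
  smulX : ∀ (f : K.Fn) X Y, D (f • X) Y = f • D X Y
  addY : ∀ X Y Y', D X (Y + Y') = D X Y + D X Y'
  smulY : ∀ X (f : K.Fn) Y, D X (f • Y) = K.der X f • Y + f • D X Y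

namespace LinConn

variable {K : KGSetting} (N : LinConn K)

/-- the classical torsion `T(X,Y) = ∇_X Y − ∇_Y X − [X,Y]` -/
def tor (X Y : K.VF) : K.VF := N.D X Y - N.D Y X - ⁅X, Y⁆

/-- the classical curvature `K(X,Y)Z = ∇_X ∇_Y Z − ∇_Y ∇_X Z − ∇_{[X,Y]} Z` -/
def curv (X Y Z : K.VF) : K.VF := N.D X (N.D Y Z) - N.D Y (N.D X Z) - N.D ⁅X, Y⁆ Z

end LinConn

/-- A Finsler space `(M,E)` in the Klein–Grifone approach: the canonical spray `S`,
the Barthel connection `Γ = [J,S]` with horizontal/vertical projectors `h`, `v`,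
the associated almost-complex structure `F`, the metric `g(X,Y) = Ω(X,FY)`,
and the Cartan tensors `𝒞` (`Ct`) and `𝒞'` (`Ct'`). -/
structure FinslerKG extends KGSetting where
  /-- the canonical spray -/
  S : VF
  JS : J S = Liouville
  /-- the spray is homogeneous of degree 2: [C,S] = S -/
  S_hom : ⁅Liouville, S⁆ = S
  /-- the Barthel connection -/
  Gam : VF →ₗ[ℝ] VF
  /-- Γ = [J,S] (Frölicher–Nijenhuis bracket) -/
  Gam_def : ∀ (X : VF), Gam X = ⁅J X, S⁆ - J ⁅X, S⁆
  JGam : ∀ (X : VF), J (Gam X) = J X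
  GamJ : ∀ (X : VF), Gam (J X) = - J X
  Gam_sq : ∀ (X : VF), Gam (Gam X) = X
  /-- the Barthel connection is homogeneous: [C,Γ] = 0 -/
  Gam_hom : ∀ (X : VF), ⁅Liouville, Gam X⁆ = Gam ⁅Liouville, X⁆
  /-- horizontal projector h = (I+Γ)/2 -/
  h : VF →ₗ[ℝ] VF
  h_def : ∀ (X : VF), (2:ℝ) • h X = X + Gam X
  /-- vertical projector v = (I−Γ)/2 -/
  v : VF →ₗ[ℝ] VF
  v_def : ∀ (X : VF), (2:ℝ) • v X = X - Gam X
  /-- the Barthel connection has vanishing torsion `t` -/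
  torsion_free : ∀ (X Y : VF), v ⁅J X, h Y⁆ + v ⁅h X, J Y⁆ = J ⁅h X, h Y⁆
  /-- the almost-complex structure of the Barthel connection -/
  F : VF →ₗ[ℝ] VF
  FJ : ∀ (X : VF), F (J X) = h X
  Fh : ∀ (X : VF), F (h X) = - J X
  /-- the metric `g(X,Y) = Ω(X,FY)` on TM -/
  g : VF →ₗ[ℝ] VF →ₗ[ℝ] Fn
  g_symm : ∀ (X Y : VF), g X Y = g Y X
  g_hJ : ∀ (X Y : VF), g (h X) (J Y) = 0
  g_hh : ∀ (X Y : VF), g (h X) (h Y) = g (J X) (J Y)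
  /-- the Cartan tensor 𝒞, `Ω(𝒞(X,Y),Z) = ½(L_{JX}(J*g))(Y,Z)` -/
  Ct : VF →ₗ[ℝ] VF →ₗ[ℝ] VF
  Ct_symm : ∀ (X Y : VF), Ct X Y = Ct Y X
  Ct_sb1 : ∀ (X Y : VF), J (Ct X Y) = 0
  Ct_sb2 : ∀ (X Y : VF), Ct (J X) Y = 0
  Ct_S : ∀ (X : VF), Ct X S = 0
  Ct_def : ∀ (X Y Z : VF), (2:ℝ) • g (Ct X Y) (J Z) =
    der (J X) (g (J Y) (J Z)) - g (J ⁅J X, Y⁆) (J Z) - g (J Y) (J ⁅J X, Z⁆)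
  /-- the Cartan tensor 𝒞', `Ω(𝒞'(X,Y),Z) = ½(L_{hX}g)(JY,JZ)` -/
  Ct' : VF →ₗ[ℝ] VF →ₗ[ℝ] VF
  Ct'_symm : ∀ (X Y : VF), Ct' X Y = Ct' Y X
  Ct'_sb1 : ∀ (X Y : VF), J (Ct' X Y) = 0
  Ct'_sb2 : ∀ (X Y : VF), Ct' (J X) Y = 0
  Ct'_S : ∀ (X : VF), Ct' X S = 0
  Ct'_def : ∀ (X Y Z : VF), (2:ℝ) • g (Ct' X Y) (J Z) =
    der (h X) (g (J Y) (J Z)) - g ⁅h X, J Y⁆ (J Z) - g (J Y) ⁅h X, J Z⁆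

namespace FinslerKG

variable (K : FinslerKG)

/-- the curvature `ℜ(X,Y) = −v[hX,hY]` of the Barthel connection -/
def Rbar (X Y : K.VF) : K.VF := - K.v ⁅K.h X, K.h Y⁆

/-- `∇` is a normal lift of the Barthel connection: `∇J = 0`,
`∇_{JX}JY = J[JX,Y]`, `∇Γ = 0`, and the nonlinear connection induced by `∇`
is the Barthel connection (equivalently `∇C = v`). -/
def IsNormalLift (N : LinConn K.toKGSetting) : Prop :=
  (∀ (X Y : K.VF), N.D X (K.J Y) = K.J (N.D X Y)) ∧
  (∀ (X Y : K.VF), N.D (K.J X) (K.J Y) = K.J ⁅K.J X, Y⁆) ∧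
  (∀ (X Y : K.VF), N.D X (K.Gam Y) = K.Gam (N.D X Y)) ∧
  (∀ (X : K.VF), N.D X K.Liouville = K.v X)

/-- `∇` is horizontally metric: `∇_{hX} g = 0`. -/
def HMetric (N : LinConn K.toKGSetting) : Prop :=
  ∀ (X Y Z : K.VF), K.der (K.h X) (K.g Y Z) =
    K.g (N.D (K.h X) Y) Z + K.g Y (N.D (K.h X) Z)

/-- the classical torsion of `∇` satisfies `J T(hX,hY) = 0`. -/
def JTorFree (N : LinConn K.toKGSetting) : Prop :=
  ∀ (X Y : K.VF), K.J (N.tor (K.h X) (K.h Y)) = 0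

/-- `∇` is the Chern connection of `(M,E)`. -/
def IsChern (N : LinConn K.toKGSetting) : Prop :=
  K.IsNormalLift N ∧ K.HMetric N ∧ K.JTorFree N

/-- the three formulas that completely determine the Chern connection. -/
def ChernEq (N : LinConn K.toKGSetting) : Prop :=
  (∀ (X Y : K.VF), N.D (K.J X) (K.J Y) = K.J ⁅K.J X, Y⁆) ∧
  (∀ (X Y : K.VF), N.D (K.h X) (K.J Y) = K.v ⁅K.h X, K.J Y⁆ + K.Ct' X Y) ∧
  (∀ (X Y : K.VF), N.D X (K.F Y) = K.F (N.D X Y))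

/-- the formulas that completely determine the Cartan connection. -/
def CartanEq (N : LinConn K.toKGSetting) : Prop :=
  (∀ (X Y : K.VF), N.D (K.J X) (K.J Y) = K.J ⁅K.J X, Y⁆ + K.Ct X Y) ∧
  (∀ (X Y : K.VF), N.D (K.h X) (K.J Y) = K.v ⁅K.h X, K.J Y⁆ + K.Ct' X Y) ∧
  (∀ (X Y : K.VF), N.D X (K.F Y) = K.F (N.D X Y))

/-- the formulas that completely determine the Berwald connection. -/
def BerwaldEq (N : LinConn K.toKGSetting) : Prop :=
  (∀ (X Y : K.VF), N.D (K.J X) (K.J Y) = K.J ⁅K.J X, Y⁆) ∧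
  (∀ (X Y : K.VF), N.D (K.h X) (K.J Y) = K.v ⁅K.h X, K.J Y⁆) ∧
  (∀ (X Y : K.VF), N.D X (K.F Y) = K.F (N.D X Y))

/-- the h-curvature `R*(X,Y)Z = K*(hX,hY)JZ` of a connection -/
def Rstar (N : LinConn K.toKGSetting) (X Y Z : K.VF) : K.VF :=
  N.curv (K.h X) (K.h Y) (K.J Z)

/-- the hv-curvature `P*(X,Y)Z = K*(hX,JY)JZ` of a connection -/
def Pstar (N : LinConn K.toKGSetting) (X Y Z : K.VF) : K.VF :=
  N.curv (K.h X) (K.J Y) (K.J Z)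

/-- the covariant derivative `(∇_W 𝒞')(X,Z)` of the Cartan tensor `𝒞'` -/
def DCt' (N : LinConn K.toKGSetting) (W X Z : K.VF) : K.VF :=
  N.D W (K.Ct' X Z) - K.Ct' (N.D W X) Z - K.Ct' X (N.D W Z)

/-- the covariant derivative `(∇_W R)(X,Y)Z` of a vector 3-form (curvature-type tensor) -/
def Dtensor3 (N : LinConn K.toKGSetting) (R : K.VF → K.VF → K.VF → K.VF)
    (W X Y Z : K.VF) : K.VF :=
  N.D W (R X Y Z) - R (N.D W X) Y Z - R X (N.D W Y) Z - R X Y (N.D W Z)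

end FinslerKG

section Aux

variable (K : FinslerKG)

private lemma kg_two_smul_inj {X Y : K.VF} (hXY : (2:ℝ) • X = (2:ℝ) • Y) : X = Y := by
  have h2 : (2:ℝ) ≠ 0 := two_ne_zero
  calc X = (2:ℝ)⁻¹ • ((2:ℝ) • X) := (inv_smul_smul₀ h2 X).symm
    _ = (2:ℝ)⁻¹ • ((2:ℝ) • Y) := by rw [hXY]
    _ = Y := inv_smul_smul₀ h2 Y

private lemma kg_hv (X : K.VF) : K.h X + K.v X = X := by
  apply kg_two_smul_inj K
  rw [smul_add, K.h_def, K.v_def, two_smul]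
  abel

private lemma kg_hJ (X : K.VF) : K.h (K.J X) = 0 := by
  apply kg_two_smul_inj K
  rw [K.h_def, K.GamJ, smul_zero]
  abel

private lemma kg_Jv (X : K.VF) : K.J (K.v X) = 0 := by
  apply kg_two_smul_inj K
  rw [← map_smul, K.v_def, map_sub, K.JGam, smul_zero, sub_self]

private lemma kg_kerJ {Z : K.VF} (hZ : K.J Z = 0) : Z = K.J ⁅Z, K.S⁆ := by
  have h1 : K.Gam Z = - K.J ⁅Z, K.S⁆ := by
    rw [K.Gam_def, hZ, zero_lie, zero_sub]
  have h2 : K.Gam (K.Gam Z) = Z := K.Gam_sq Z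
  rw [h1, map_neg, K.GamJ, neg_neg] at h2
  exact h2.symm

private lemma kg_h_vJ (X Y : K.VF) : K.h ⁅K.v X, K.J Y⁆ = 0 := by
  have hv : K.v X = K.J ⁅K.v X, K.S⁆ := kg_kerJ K (kg_Jv K X)
  rw [hv, K.JJ, map_add, kg_hJ, kg_hJ, add_zero]

end Aux

/-- The torsion of the Chern connection is given by
`T*(hX,hY) = ℜ(X,Y)`, `T*(hX,JY) = 𝒞'(X,Y)` and `T*(JX,JY) = 0`. -/
theorem chern_torsion (K : FinslerKG) (N : LinConn K.toKGSetting)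
    (hN : K.ChernEq N) :
    ∀ X Y : K.VF,
      N.tor (K.h X) (K.h Y) = K.Rbar X Y ∧
      N.tor (K.h X) (K.J Y) = K.Ct' X Y ∧
      N.tor (K.J X) (K.J Y) = 0 := by
  obtain ⟨hJJ, hhJ, hF⟩ := hN
  intro X Y
  -- D (J A) (h B) = h ⁅J A, B⁆
  have DJh : ∀ A B : K.VF, N.D (K.J A) (K.h B) = K.h ⁅K.J A, B⁆ := by
    intro A B
    rw [← K.FJ B, hF, hJJ, K.FJ]
  -- D (h A) (h B) = F (v ⁅h A, J B⁆) + F (K.Ct' A B)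
  have Dhh : ∀ A B : K.VF,
      N.D (K.h A) (K.h B) = K.F (K.v ⁅K.h A, K.J B⁆) + K.F (K.Ct' A B) := by
    intro A B
    rw [← K.FJ B, hF, hhJ, map_add]
  refine ⟨?_, ?_, ?_⟩
  · -- horizontal-horizontal part
    have key : N.D (K.h X) (K.h Y) - N.D (K.h Y) (K.h X) = K.h ⁅K.h X, K.h Y⁆ := by
      rw [Dhh, Dhh, K.Ct'_symm Y X]
      have : K.F (K.v ⁅K.h X, K.J Y⁆) - K.F (K.v ⁅K.h Y, K.J X⁆)
          = K.F (K.v ⁅K.J X, K.h Y⁆ + K.v ⁅K.h X, K.J Y⁆) := by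
        rw [← lie_skew (K.h Y) (K.J X), map_neg, map_neg, map_add]
        abel
      rw [show K.F (K.v ⁅K.h X, K.J Y⁆) + K.F (K.Ct' X Y) -
            (K.F (K.v ⁅K.h Y, K.J X⁆) + K.F (K.Ct' X Y))
          = K.F (K.v ⁅K.h X, K.J Y⁆) - K.F (K.v ⁅K.h Y, K.J X⁆) by abel,
        this, K.torsion_free, K.FJ]
    rw [LinConn.tor, key, FinslerKG.Rbar]
    have := kg_hv K ⁅K.h X, K.h Y⁆
    rw [show K.h ⁅K.h X, K.h Y⁆ = ⁅K.h X, K.h Y⁆ - K.v ⁅K.h X, K.h Y⁆ by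
      rw [eq_sub_iff_add_eq]; exact this]
    abel
  · -- horizontal-vertical part
    rw [LinConn.tor, hhJ, DJh]
    have key : K.h ⁅K.J Y, K.h X⁆ + K.h ⁅K.h X, K.J Y⁆ = 0 := by
      rw [← lie_skew (K.h X) (K.J Y), map_neg]; abel
    have key2 : K.h ⁅K.J Y, X⁆ + K.h ⁅K.h X, K.J Y⁆ = 0 := by
      have hX : X = K.h X + K.v X := (kg_hv K X).symm
      have hsplit : ⁅K.J Y, X⁆ = ⁅K.J Y, K.h X⁆ + ⁅K.J Y, K.v X⁆ := by
        conv_lhs => rw [hX]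
        rw [lie_add]
      rw [hsplit, map_add]
      have hv0 : K.h ⁅K.J Y, K.v X⁆ = 0 := by
        rw [← lie_skew (K.J Y) (K.v X), map_neg, kg_h_vJ, neg_zero]
      rw [hv0, add_zero]
      exact key
    have hk : K.h ⁅K.J Y, X⁆ = - K.h ⁅K.h X, K.J Y⁆ := by
      rw [eq_neg_iff_add_eq_zero]; exact key2
    rw [hk]
    have hvB := kg_hv K ⁅K.h X, K.J Y⁆
    calc K.v ⁅K.h X, K.J Y⁆ + K.Ct' X Y - -K.h ⁅K.h X, K.J Y⁆ - ⁅K.h X, K.J Y⁆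
        = (K.h ⁅K.h X, K.J Y⁆ + K.v ⁅K.h X, K.J Y⁆) - ⁅K.h X, K.J Y⁆ + K.Ct' X Y := by
          abel
      _ = ⁅K.h X, K.J Y⁆ - ⁅K.h X, K.J Y⁆ + K.Ct' X Y := by rw [hvB]
      _ = K.Ct' X Y := by abel
  · -- vertical-vertical part
    rw [LinConn.tor, hJJ, hJJ, K.JJ X Y]
    have hsk : ⁅K.J Y, X⁆ = -⁅X, K.J Y⁆ := by
      rw [← lie_skew X (K.J Y), neg_neg]
    rw [hsk, map_neg]
    abel
end

section
/- The h-curvature of the Chern connection is related to that of the Cartan connection by R*(X,Y)Z = R(X,Y)Z − C(Fℜ(X,Y), Z), where R is the h-curvature of the Cartan connection, C the Cartan torsion tensor (Ω(C(X,Y),Z) = ½(L_{JX}(J*g))(Y,Z)), F the almost-complex structure and ℜ the Barthel curvature. -/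
section ChernCartanHelpers

lemma cancel2' {V : Type*} [AddCommGroup V] [Module ℝ V] {a b : V}
    (h : (2:ℝ) • a = (2:ℝ) • b) : a = b := by
  have h2 : ((2:ℝ)⁻¹ * 2) = 1 := by norm_num
  calc a = ((2:ℝ)⁻¹ * 2) • a := by rw [h2, one_smul]
    _ = (2:ℝ)⁻¹ • ((2:ℝ) • a) := by rw [mul_smul]
    _ = (2:ℝ)⁻¹ • ((2:ℝ) • b) := by rw [h]
    _ = ((2:ℝ)⁻¹ * 2) • b := by rw [mul_smul]
    _ = b := by rw [h2, one_smul]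

lemma cancelAdd' {V : Type*} [AddCommGroup V] [Module ℝ V] {a b : V}
    (h : a + a = b + b) : a = b :=
  cancel2' (by simpa [two_smul] using h)

namespace FinslerKG

variable (K : FinslerKG)

/-- h + v = id -/
lemma hv_id (W : K.VF) : K.h W + K.v W = W := by
  apply cancel2'
  rw [smul_add, K.h_def, K.v_def, two_smul]
  abel

/-- J[JW,S] = JW -/
lemma J_bracket_JS (W : K.VF) : K.J ⁅K.J W, K.S⁆ = K.J W := by
  have jj := K.JJ W K.S
  rw [K.JS] at jj
  have cj := K.CJ W
  have h1 : ⁅K.J W, K.Liouville⁆ = K.J W - K.J ⁅K.Liouville, W⁆ := by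
    rw [← lie_skew, cj]; abel
  have h2 : K.J ⁅W, K.Liouville⁆ = - K.J ⁅K.Liouville, W⁆ := by
    rw [← lie_skew, map_neg]
  rw [h1, h2] at jj
  have jj' : K.J ⁅K.J W, K.S⁆ - K.J ⁅K.Liouville, W⁆ = K.J W - K.J ⁅K.Liouville, W⁆ := by
    rw [sub_eq_add_neg]; exact jj.symm
  exact sub_left_inj.mp jj'

/-- every vertical vector is a J-image, explicitly -/
lemma two_v (W : K.VF) :
    K.v W + K.v W = K.J ⁅(W - ⁅K.J W, K.S⁆) + W, K.S⁆ := by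
  set N : K.VF := W - ⁅K.J W, K.S⁆ with hNdef
  have hJN : K.J N = 0 := by
    rw [hNdef, map_sub, J_bracket_JS, sub_self]
  have hhN : K.h N = 0 := by
    rw [← K.FJ N, hJN, map_zero]
  have hGamN : K.Gam N = - N := by
    have := K.h_def N
    rw [hhN, smul_zero] at this
    have := this.symm
    linear_combination (norm := abel) this
  have hGamN' : K.Gam N = - K.J ⁅N, K.S⁆ := by
    rw [K.Gam_def N, hJN, zero_lie, zero_sub]
  have hNJ : N = K.J ⁅N, K.S⁆ := by
    have := hGamN.symm.trans hGamN'
    exact neg_injective this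
  have hv2 : (2:ℝ) • K.v W = K.J ⁅N + W, K.S⁆ := by
    rw [K.v_def, K.Gam_def W]
    have : W - (⁅K.J W, K.S⁆ - K.J ⁅W, K.S⁆) = N + K.J ⁅W, K.S⁆ := by
      rw [hNdef]; abel
    rw [this]
    conv_lhs => rw [hNJ]
    rw [← map_add, ← add_lie]
  rw [← hv2, two_smul]

end FinslerKG

/-- the Chern and Cartan connections agree on horizontal covariant derivatives -/
lemma horizEq (K : FinslerKG) (N1 N2 : LinConn K.toKGSetting)
    (h2a : ∀ X Y : K.VF, N1.D (K.h X) (K.J Y) = K.v ⁅K.h X, K.J Y⁆ + K.Ct' X Y)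
    (h2b : ∀ X Y : K.VF, N2.D (K.h X) (K.J Y) = K.v ⁅K.h X, K.J Y⁆ + K.Ct' X Y)
    (h3a : ∀ X Y : K.VF, N1.D X (K.F Y) = K.F (N1.D X Y))
    (h3b : ∀ X Y : K.VF, N2.D X (K.F Y) = K.F (N2.D X Y)) :
    ∀ (X W : K.VF), N1.D (K.h X) W = N2.D (K.h X) W := by
  intro X W
  have hJ : ∀ U : K.VF, N1.D (K.h X) (K.J U) = N2.D (K.h X) (K.J U) := by
    intro U; rw [h2a, h2b]
  have hH : N1.D (K.h X) (K.h W) = N2.D (K.h X) (K.h W) := by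
    rw [← K.FJ W, h3a, h3b, hJ W]
  have hV : N1.D (K.h X) (K.v W) = N2.D (K.h X) (K.v W) := by
    apply cancelAdd'
    rw [← N1.addY, ← N2.addY, K.two_v W, hJ]
  calc N1.D (K.h X) W = N1.D (K.h X) (K.h W + K.v W) := by rw [K.hv_id]
    _ = N1.D (K.h X) (K.h W) + N1.D (K.h X) (K.v W) := N1.addY _ _ _
    _ = N2.D (K.h X) (K.h W) + N2.D (K.h X) (K.v W) := by rw [hH, hV]
    _ = N2.D (K.h X) (K.h W + K.v W) := (N2.addY _ _ _).symm
    _ = N2.D (K.h X) W := by rw [K.hv_id]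

end ChernCartanHelpers

/-- The h-curvature of the Chern connection and that of the
Cartan connection are related by `R*(X,Y)Z = R(X,Y)Z − 𝒞(Fℜ(X,Y), Z)`. -/
theorem chern_h_curvature (K : FinslerKG) (Nch Nca : LinConn K.toKGSetting)
    (hch : K.ChernEq Nch) (hca : K.CartanEq Nca) :
    ∀ X Y Z : K.VF,
      Nch.curv (K.h X) (K.h Y) (K.J Z) =
        Nca.curv (K.h X) (K.h Y) (K.J Z) - K.Ct (K.F (K.Rbar X Y)) Z := by
  intro X Y Z
  obtain ⟨hch1, hch2, hch3⟩ := hch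
  obtain ⟨hca1, hca2, hca3⟩ := hca
  have hEq := horizEq K Nch Nca hch2 hca2 hch3 hca3
  simp only [LinConn.curv, FinslerKG.Rbar]
  set A : K.VF := ⁅K.h X, K.h Y⁆ with hAdef
  set M : K.VF := ⁅(A - ⁅K.J A, K.S⁆) + A, K.S⁆ with hMdef
  have hsum : K.v A + K.v A = K.J M := K.two_v A
  -- the two connections agree on the first two curvature terms
  have hinnerY : Nch.D (K.h Y) (K.J Z) = Nca.D (K.h Y) (K.J Z) := by rw [hch2, hca2]
  have hinnerX : Nch.D (K.h X) (K.J Z) = Nca.D (K.h X) (K.J Z) := by rw [hch2, hca2]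
  have T1 : Nch.D (K.h X) (Nch.D (K.h Y) (K.J Z)) = Nca.D (K.h X) (Nca.D (K.h Y) (K.J Z)) := by
    rw [hinnerY]; exact hEq X _
  have T2 : Nch.D (K.h Y) (Nch.D (K.h X) (K.J Z)) = Nca.D (K.h Y) (Nca.D (K.h X) (K.J Z)) := by
    rw [hinnerX]; exact hEq Y _
  -- Ct kills vertical vectors in the first slot
  have CtVM : K.Ct (K.v M) Z = 0 := by
    apply cancelAdd' (b := 0)
    have : K.Ct (K.v M) Z + K.Ct (K.v M) Z = K.Ct (K.v M + K.v M) Z := by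
      rw [map_add]; rfl
    rw [this, K.two_v M, K.Ct_sb2, add_zero]
  have hCtM : K.Ct M Z = K.Ct (K.h M) Z := by
    conv_lhs => rw [← K.hv_id M]
    rw [map_add, LinearMap.add_apply, CtVM, add_zero]
  have hFv : K.F (K.v A) + K.F (K.v A) = K.h M := by
    rw [← map_add, hsum, K.FJ]
  have CtFv2 : K.Ct (K.F (K.v A)) Z + K.Ct (K.F (K.v A)) Z = K.Ct M Z := by
    have : K.Ct (K.F (K.v A)) Z + K.Ct (K.F (K.v A)) Z
        = K.Ct (K.F (K.v A) + K.F (K.v A)) Z := by rw [map_add]; rfl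
    rw [this, hFv, ← hCtM]
  -- the vertical part of the bracket produces the Cartan tensor correction
  have KeyV : Nca.D (K.v A) (K.J Z) = Nch.D (K.v A) (K.J Z) + K.Ct (K.F (K.v A)) Z := by
    apply cancelAdd'
    calc Nca.D (K.v A) (K.J Z) + Nca.D (K.v A) (K.J Z)
        = Nca.D (K.v A + K.v A) (K.J Z) := (Nca.addX _ _ _).symm
      _ = K.J ⁅K.J M, Z⁆ + K.Ct M Z := by rw [hsum, hca1]
      _ = K.J ⁅K.J M, Z⁆ + (K.Ct (K.F (K.v A)) Z + K.Ct (K.F (K.v A)) Z) := by rw [CtFv2]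
      _ = Nch.D (K.v A + K.v A) (K.J Z)
            + (K.Ct (K.F (K.v A)) Z + K.Ct (K.F (K.v A)) Z) := by rw [hsum, hch1]
      _ = Nch.D (K.v A) (K.J Z) + Nch.D (K.v A) (K.J Z)
            + (K.Ct (K.F (K.v A)) Z + K.Ct (K.F (K.v A)) Z) := by rw [Nch.addX]
      _ = (Nch.D (K.v A) (K.J Z) + K.Ct (K.F (K.v A)) Z)
            + (Nch.D (K.v A) (K.J Z) + K.Ct (K.F (K.v A)) Z) := by abel
  have ech := Nch.addX (K.h A) (K.v A) (K.J Z)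
  have eca := Nca.addX (K.h A) (K.v A) (K.J Z)
  rw [K.hv_id] at ech eca
  have T3 : Nca.D A (K.J Z) = Nch.D A (K.J Z) + K.Ct (K.F (K.v A)) Z := by
    rw [ech, eca, KeyV, hEq A (K.J Z)]
    abel
  have hRbar : K.Ct (K.F (- K.v A)) Z = - K.Ct (K.F (K.v A)) Z := by
    rw [map_neg, map_neg, LinearMap.neg_apply]
  rw [T1, T2, T3, hRbar]
  abel
end

section
/- The hv-curvature of the Chern connection satisfies P*(X,Y)Z = P°(X,Y)Z − (D*_{JY}C')(X,Z), where P° is the hv-curvature of the Berwald connection. -/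
namespace FinslerKG

variable (K : FinslerKG)

private lemma two_smul_cancel {a b : K.VF} (h : (2:ℝ) • a = (2:ℝ) • b) : a = b := by
  have h2 : ((2:ℝ)⁻¹) • ((2:ℝ) • a) = ((2:ℝ)⁻¹) • ((2:ℝ) • b) := by rw [h]
  rwa [inv_smul_smul₀ (by norm_num : (2:ℝ) ≠ 0),
    inv_smul_smul₀ (by norm_num : (2:ℝ) ≠ 0)] at h2

private lemma hv_add (X : K.VF) : K.h X + K.v X = X := by
  apply K.two_smul_cancel
  rw [smul_add, K.h_def, K.v_def, two_smul]
  abel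

private lemma Jv (X : K.VF) : K.J (K.v X) = 0 := by
  apply K.two_smul_cancel
  rw [smul_zero, ← map_smul, K.v_def, map_sub, K.JGam, sub_self]

private lemma hJ (X : K.VF) : K.h (K.J X) = 0 := by
  apply K.two_smul_cancel
  rw [smul_zero, K.h_def, K.GamJ]
  abel

private lemma ker_im {W : K.VF} (hW : K.J W = 0) : K.J ⁅W, K.S⁆ = W := by
  have h1 : K.Gam W = -K.J ⁅W, K.S⁆ := by rw [K.Gam_def, hW, zero_lie, zero_sub]
  have h2 := K.Gam_sq W
  rwa [h1, map_neg, K.GamJ, neg_neg] at h2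

private lemma v_im (X : K.VF) : K.J ⁅K.v X, K.S⁆ = K.v X := K.ker_im (K.Jv X)

private lemma Ct'_v1 (A B : K.VF) : K.Ct' (K.v A) B = 0 := by
  rw [← K.v_im A, K.Ct'_sb2]

private lemma Ct'_J2 (A B : K.VF) : K.Ct' A (K.J B) = 0 := by
  rw [K.Ct'_symm, K.Ct'_sb2]

private lemma Ct'_v2 (A B : K.VF) : K.Ct' A (K.v B) = 0 := by
  rw [K.Ct'_symm, K.Ct'_v1]

private lemma Ct'_hfst (A B : K.VF) : K.Ct' (K.h A) B = K.Ct' A B := by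
  conv_rhs => rw [← K.hv_add A]
  rw [map_add, LinearMap.add_apply, K.Ct'_v1, add_zero]

private lemma Ct'_hker {W : K.VF} (B : K.VF) (hW : K.h W = 0) : K.Ct' W B = 0 := by
  have h2 : K.v W = W := by
    have h3 := K.hv_add W
    rwa [hW, zero_add] at h3
  rw [← h2]
  exact K.Ct'_v1 W B

private lemma h_lie_Jv (Y X : K.VF) : K.h ⁅K.J Y, K.v X⁆ = 0 := by
  rw [← K.v_im X, K.JJ, map_add, K.hJ, K.hJ, add_zero]

private lemma h_lie_vJ (Y X : K.VF) : K.h ⁅K.v X, K.J Y⁆ = 0 := by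
  rw [← lie_skew, map_neg, K.h_lie_Jv, neg_zero]

private lemma keyC (X Y Z : K.VF) :
    K.Ct' ⁅K.h X, K.J Y⁆ Z + K.Ct' (K.h ⁅K.J Y, X⁆) Z = 0 := by
  have h1 : K.h X = X - K.v X := eq_sub_of_add_eq (K.hv_add X)
  rw [K.Ct'_hfst, h1, sub_lie, map_sub, LinearMap.sub_apply,
    K.Ct'_hker Z (K.h_lie_vJ Y X), sub_zero]
  have h2 : ⁅X, K.J Y⁆ = -⁅K.J Y, X⁆ := (lie_skew _ _).symm
  rw [h2, map_neg, LinearMap.neg_apply]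
  abel

private lemma D_vert2 (N : LinConn K.toKGSetting)
    (d1 : ∀ A B : K.VF, N.D (K.J A) (K.J B) = K.J ⁅K.J A, B⁆) (A W : K.VF) :
    N.D (K.J A) (K.v W) = K.J ⁅K.J A, ⁅K.v W, K.S⁆⁆ := by
  conv_lhs => rw [← K.v_im W]
  exact d1 _ _

private lemma D_vert1 (N : LinConn K.toKGSetting)
    (d1 : ∀ A B : K.VF, N.D (K.J A) (K.J B) = K.J ⁅K.J A, B⁆) (W B : K.VF) :
    N.D (K.v W) (K.J B) = K.J ⁅K.J ⁅K.v W, K.S⁆, B⁆ := by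
  conv_lhs => rw [← K.v_im W]
  exact d1 _ _

private lemma DJfull (N : LinConn K.toKGSetting)
    (d1 : ∀ A B : K.VF, N.D (K.J A) (K.J B) = K.J ⁅K.J A, B⁆)
    (d3 : ∀ A B : K.VF, N.D A (K.F B) = K.F (N.D A B)) (Y X : K.VF) :
    N.D (K.J Y) X = K.h ⁅K.J Y, X⁆ + K.J ⁅K.J Y, ⁅K.v X, K.S⁆⁆ := by
  conv_lhs => rw [← K.hv_add X]
  rw [N.addY]
  congr 1
  · rw [← K.FJ X, d3, d1, K.FJ]
  · exact K.D_vert2 N d1 Y X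

end FinslerKG

/-- The hv-curvature of the Chern connection satisfies
`P*(X,Y)Z = P°(X,Y)Z − (D*_{JY}𝒞')(X,Z)`, where `P°` is the hv-curvature of the
Berwald connection. -/
theorem chern_hv_curvature (K : FinslerKG) (Nch Nb : LinConn K.toKGSetting)
    (hch : K.ChernEq Nch) (hb : K.BerwaldEq Nb) :
    ∀ X Y Z : K.VF,
      Nch.curv (K.h X) (K.J Y) (K.J Z) =
        Nb.curv (K.h X) (K.J Y) (K.J Z) - K.DCt' Nch (K.J Y) X Z := by
  obtain ⟨c1, c2, c3⟩ := hch
  obtain ⟨b1, b2, b3⟩ := hb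
  intro X Y Z
  have EchT2 : Nch.D (K.J Y) (K.v ⁅K.h X, K.J Z⁆ + K.Ct' X Z)
      = K.J ⁅K.J Y, ⁅K.v ⁅K.h X, K.J Z⁆, K.S⁆⁆ + Nch.D (K.J Y) (K.Ct' X Z) := by
    rw [Nch.addY, K.D_vert2 Nch c1 Y _]
  have EbT2 : Nb.D (K.J Y) (K.v ⁅K.h X, K.J Z⁆)
      = K.J ⁅K.J Y, ⁅K.v ⁅K.h X, K.J Z⁆, K.S⁆⁆ := K.D_vert2 Nb b1 Y _
  have EchT3 : Nch.D ⁅K.h X, K.J Y⁆ (K.J Z)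
      = (K.v ⁅K.h ⁅K.h X, K.J Y⁆, K.J Z⁆ + K.Ct' ⁅K.h X, K.J Y⁆ Z)
        + K.J ⁅K.J ⁅K.v ⁅K.h X, K.J Y⁆, K.S⁆, Z⁆ := by
    conv_lhs => rw [← K.hv_add ⁅K.h X, K.J Y⁆]
    rw [Nch.addX, c2, K.D_vert1 Nch c1 _ Z]
  have EbT3 : Nb.D ⁅K.h X, K.J Y⁆ (K.J Z)
      = K.v ⁅K.h ⁅K.h X, K.J Y⁆, K.J Z⁆
        + K.J ⁅K.J ⁅K.v ⁅K.h X, K.J Y⁆, K.S⁆, Z⁆ := by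
    conv_lhs => rw [← K.hv_add ⁅K.h X, K.J Y⁆]
    rw [Nb.addX, b2, K.D_vert1 Nb b1 _ Z]
  have E10 : K.Ct' (Nch.D (K.J Y) X) Z = K.Ct' (K.h ⁅K.J Y, X⁆) Z := by
    rw [K.DJfull Nch c1 c3 Y X, map_add, LinearMap.add_apply, K.Ct'_sb2, add_zero]
  have E11 : K.Ct' X (Nch.D (K.J Y) Z) = K.Ct' X (K.h ⁅K.J Y, Z⁆) := by
    rw [K.DJfull Nch c1 c3 Y Z, map_add, K.Ct'_J2, add_zero]
  have E12 : K.Ct' X ⁅K.J Y, Z⁆ = K.Ct' X (K.h ⁅K.J Y, Z⁆) := by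
    conv_lhs => rw [← K.hv_add ⁅K.J Y, Z⁆]
    rw [map_add, K.Ct'_v2, add_zero]
  have E13 : K.Ct' ⁅K.h X, K.J Y⁆ Z = -K.Ct' (K.h ⁅K.J Y, X⁆) Z := by
    exact eq_neg_of_add_eq_zero_left (K.keyC X Y Z)
  simp only [LinConn.curv, FinslerKG.DCt']
  rw [c1 Y Z, b1 Y Z, c2 X Z, b2 X Z, c2 X ⁅K.J Y, Z⁆, b2 X ⁅K.J Y, Z⁆,
    EchT2, EbT2, EchT3, EbT3, E10, E11, E12, E13]
  abel
end

section
/- The hv-curvature P* of the Chern connection satisfies the symmetry P*(X,Y)Z = P*(Z,Y)X for all vector fields X,Y,Z on TM. -/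
section ChernAux

open LinConn

variable {Kg : KGSetting} (M : LinConn Kg)

private lemma D_zero1 (Y : Kg.VF) : M.D 0 Y = 0 := by
  have h := M.addX 0 0 Y
  rw [add_zero] at h
  have h2 : M.D 0 Y + 0 = M.D 0 Y + M.D 0 Y := by rw [add_zero]; exact h
  exact (add_left_cancel h2).symm

private lemma D_neg1 (X Y : Kg.VF) : M.D (-X) Y = -M.D X Y := by
  have h := M.addX (-X) X Y
  rw [neg_add_cancel, D_zero1] at h
  exact eq_neg_of_add_eq_zero_left h.symm

private lemma D_sub1 (X X' Y : Kg.VF) : M.D (X - X') Y = M.D X Y - M.D X' Y := by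
  rw [sub_eq_add_neg, M.addX, D_neg1, sub_eq_add_neg]

private lemma D_zero2 (X : Kg.VF) : M.D X 0 = 0 := by
  have h := M.addY X 0 0
  rw [add_zero] at h
  have h2 : M.D X 0 + 0 = M.D X 0 + M.D X 0 := by rw [add_zero]; exact h
  exact (add_left_cancel h2).symm

private lemma D_neg2 (X Y : Kg.VF) : M.D X (-Y) = -M.D X Y := by
  have h := M.addY X (-Y) Y
  rw [neg_add_cancel, D_zero2] at h
  exact eq_neg_of_add_eq_zero_left h.symm

private lemma D_sub2 (X Y Y' : Kg.VF) : M.D X (Y - Y') = M.D X Y - M.D X Y' := by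
  rw [sub_eq_add_neg, M.addY, D_neg2, sub_eq_add_neg]

private lemma skew' (x y : Kg.VF) : ⁅x, y⁆ = -⁅y, x⁆ := by rw [← lie_skew]

/-- first Bianchi identity for a linear connection with torsion -/
private lemma bianchi (A B C : Kg.VF) :
    M.curv A B C + M.curv B C A + M.curv C A B =
    M.D A (M.tor B C) - M.tor (M.D A B) C - M.tor B (M.D A C) + M.tor (M.tor A B) C +
    (M.D B (M.tor C A) - M.tor (M.D B C) A - M.tor C (M.D B A) + M.tor (M.tor B C) A) +
    (M.D C (M.tor A B) - M.tor (M.D C A) B - M.tor A (M.D C B) + M.tor (M.tor C A) B) := by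
  simp only [LinConn.curv, LinConn.tor, D_sub1, D_sub2, sub_lie, lie_sub]
  rw [show ⁅M.D A C, B⁆ = -⁅B, M.D A C⁆ from skew' _ _,
      show ⁅M.D B A, C⁆ = -⁅C, M.D B A⁆ from skew' _ _,
      show ⁅M.D C B, A⁆ = -⁅A, M.D C B⁆ from skew' _ _,
      show ⁅⁅B, C⁆, A⁆ = -⁅⁅A, B⁆, C⁆ - ⁅B, ⁅A, C⁆⁆ from by
        rw [skew' (⁅B, C⁆) A, leibniz_lie]; abel,
      show ⁅⁅C, A⁆, B⁆ = ⁅B, ⁅A, C⁆⁆ from by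
        rw [skew' (⁅C, A⁆) B, skew' C A, lie_neg, neg_neg]]
  abel

end ChernAux

section ChernProof

variable {K : FinslerKG} {N : LinConn K.toKGSetting}

private lemma half_eq {a b : K.VF} (h : (2:ℝ) • a = (2:ℝ) • b) : a = b := by
  have h2 : ((2:ℝ)⁻¹ * 2) = 1 := by norm_num
  have h3 := congrArg (fun x => (2:ℝ)⁻¹ • x) h
  simpa [smul_smul, h2] using h3

private lemma hv_add (W : K.VF) : K.h W + K.v W = W := by
  apply half_eq
  rw [smul_add, K.h_def, K.v_def, two_smul]
  abel

private lemma J_h (W : K.VF) : K.J (K.h W) = K.J W := by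
  apply half_eq
  rw [← map_smul, K.h_def, map_add, K.JGam, two_smul]

private lemma J_v (W : K.VF) : K.J (K.v W) = 0 := by
  apply half_eq
  rw [smul_zero, ← map_smul, K.v_def, map_sub, K.JGam, sub_self]

private lemma h_J (W : K.VF) : K.h (K.J W) = 0 := by
  apply half_eq
  rw [smul_zero, K.h_def, K.GamJ, add_neg_cancel]

/-- every element of the kernel of J (in particular every vertical vector)
is of the form `J W`, explicitly `J ⁅V, S⁆`. -/
private lemma kerJ_rep {V : K.VF} (hV : K.J V = 0) : V = K.J ⁅V, K.S⁆ := by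
  have h1 := K.Gam_def V
  rw [hV, zero_lie, zero_sub] at h1
  have h2 := K.Gam_sq V
  rw [h1, map_neg, K.GamJ, neg_neg] at h2
  exact h2.symm

private lemma JF_ker {V : K.VF} (hV : K.J V = 0) : K.J (K.F V) = V := by
  conv_lhs => rw [kerJ_rep hV]
  rw [K.FJ, J_h, ← kerJ_rep hV]

private lemma D_ker1 (hN : K.ChernEq N) {V : K.VF} (hV : K.J V = 0) (B : K.VF) :
    N.D V (K.J B) = K.J ⁅V, B⁆ := by
  have hrep := kerJ_rep hV
  calc N.D V (K.J B) = N.D (K.J ⁅V, K.S⁆) (K.J B) := by rw [← hrep]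
    _ = K.J ⁅K.J ⁅V, K.S⁆, B⁆ := hN.1 _ _
    _ = K.J ⁅V, B⁆ := by rw [← hrep]

private lemma J_D_J (hN : K.ChernEq N) (W B : K.VF) : K.J (N.D W (K.J B)) = 0 := by
  have hsplit : N.D W (K.J B) = N.D (K.h W) (K.J B) + N.D (K.v W) (K.J B) := by
    rw [← N.addX, hv_add]
  rw [hsplit, hN.2.1 W B, D_ker1 hN (J_v W) B]
  simp [J_v, K.Ct'_sb1, K.J_sq, map_add]

private lemma J_D_ker (hN : K.ChernEq N) (W : K.VF) {V : K.VF} (hV : K.J V = 0) :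
    K.J (N.D W V) = 0 := by
  rw [kerJ_rep hV]
  exact J_D_J hN W _

private lemma J_D_h (hN : K.ChernEq N) (W B : K.VF) :
    K.J (N.D W (K.h B)) = N.D W (K.J B) := by
  rw [← K.FJ B, hN.2.2]
  exact JF_ker (J_D_J hN W B)

private lemma D_h_form (hN : K.ChernEq N) (W B : K.VF) :
    N.D W (K.h B) = K.h ⁅N.D W (K.J B), K.S⁆ := by
  rw [← K.FJ B, hN.2.2]
  conv_lhs => rw [kerJ_rep (J_D_J hN W B)]
  rw [K.FJ]

private lemma tor_h_J (hN : K.ChernEq N) (A B : K.VF) :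
    N.tor (K.h A) (K.J B) = K.Ct' A B := by
  have hD2 : N.D (K.J B) (K.h A) = K.h ⁅K.J B, A⁆ := by
    rw [← K.FJ A, hN.2.2, hN.1, K.FJ]
  have hva : K.v A = A - K.h A := by
    rw [eq_sub_iff_add_eq, add_comm]; exact hv_add A
  have e1 : ⁅K.J B, A⁆ + ⁅K.h A, K.J B⁆ = ⁅K.J B, K.v A⁆ := by
    rw [hva, lie_sub, sub_eq_add_neg, lie_skew]
  have h0 : K.h (⁅K.J B, A⁆ + ⁅K.h A, K.J B⁆) = 0 := by
    rw [e1, kerJ_rep (J_v A), K.JJ, map_add, h_J, h_J, add_zero]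
  have e0 : N.tor (K.h A) (K.J B) =
      K.v ⁅K.h A, K.J B⁆ + K.Ct' A B - K.h ⁅K.J B, A⁆ - ⁅K.h A, K.J B⁆ := by
    simp only [LinConn.tor]
    rw [hN.2.1 A B, hD2]
  rw [e0]
  nth_rewrite 2 [(hv_add ⁅K.h A, K.J B⁆).symm]
  rw [show K.v ⁅K.h A, K.J B⁆ + K.Ct' A B - K.h ⁅K.J B, A⁆ -
        (K.h ⁅K.h A, K.J B⁆ + K.v ⁅K.h A, K.J B⁆) =
      K.Ct' A B - (K.h ⁅K.J B, A⁆ + K.h ⁅K.h A, K.J B⁆) from by abel,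
    ← map_add, h0, sub_zero]

private lemma tor_antisymm (u w : K.VF) : N.tor u w = -N.tor w u := by
  simp only [LinConn.tor]
  rw [show ⁅w, u⁆ = -⁅u, w⁆ from by rw [← lie_skew]]
  abel

private lemma tor_J_J (hN : K.ChernEq N) (A B : K.VF) :
    N.tor (K.J A) (K.J B) = 0 := by
  simp only [LinConn.tor]
  rw [hN.1, hN.1, K.JJ,
    show ⁅K.J B, A⁆ = -⁅A, K.J B⁆ from by rw [← lie_skew], map_neg]
  abel

private lemma tor_ker_J (hN : K.ChernEq N) {V : K.VF} (hV : K.J V = 0) (B : K.VF) :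
    N.tor V (K.J B) = 0 := by
  have hrep := kerJ_rep hV
  calc N.tor V (K.J B) = N.tor (K.J ⁅V, K.S⁆) (K.J B) := by rw [← hrep]
    _ = 0 := tor_J_J hN _ B

private lemma J_tor_h_ker (hN : K.ChernEq N) (A : K.VF) {V : K.VF} (hV : K.J V = 0) :
    K.J (N.tor (K.h A) V) = 0 := by
  have hrep := kerJ_rep hV
  have e : N.tor (K.h A) V = K.Ct' A ⁅V, K.S⁆ := by
    calc N.tor (K.h A) V = N.tor (K.h A) (K.J ⁅V, K.S⁆) := by rw [← hrep]
      _ = K.Ct' A ⁅V, K.S⁆ := tor_h_J hN A _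
  rw [e]
  exact K.Ct'_sb1 _ _

private lemma J_tor_ker_h (hN : K.ChernEq N) (A : K.VF) {V : K.VF} (hV : K.J V = 0) :
    K.J (N.tor V (K.h A)) = 0 := by
  rw [tor_antisymm, map_neg, J_tor_h_ker hN A hV, neg_zero]

private lemma J_tor_h_h (hN : K.ChernEq N) (A B : K.VF) :
    K.J (N.tor (K.h A) (K.h B)) = 0 := by
  have e : K.J (N.tor (K.h A) (K.h B)) =
      K.v ⁅K.h A, K.J B⁆ + K.Ct' A B - (K.v ⁅K.h B, K.J A⁆ + K.Ct' B A) -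
        K.J ⁅K.h A, K.h B⁆ := by
    simp only [LinConn.tor, map_sub]
    rw [J_D_h hN, J_D_h hN, hN.2.1, hN.2.1]
  rw [e, K.Ct'_symm B A,
    show ⁅K.h B, K.J A⁆ = -⁅K.J A, K.h B⁆ from by rw [← lie_skew], map_neg,
    show K.v ⁅K.h A, K.J B⁆ + K.Ct' A B - (-K.v ⁅K.J A, K.h B⁆ + K.Ct' A B) -
        K.J ⁅K.h A, K.h B⁆ =
      K.v ⁅K.J A, K.h B⁆ + K.v ⁅K.h A, K.J B⁆ - K.J ⁅K.h A, K.h B⁆ from by abel,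
    K.torsion_free A B, sub_self]

private lemma curv_swap (A B C : K.VF) : N.curv B A C = -N.curv A B C := by
  simp only [LinConn.curv]
  rw [show ⁅B, A⁆ = -⁅A, B⁆ from by rw [← lie_skew], D_neg1]
  abel

private lemma curv_F (hN : K.ChernEq N) (A B C : K.VF) :
    N.curv A B (K.F C) = K.F (N.curv A B C) := by
  simp only [LinConn.curv, hN.2.2, map_sub]

private lemma J_curv_J (hN : K.ChernEq N) (A B C : K.VF) :
    K.J (N.curv A B (K.J C)) = 0 := by
  simp only [LinConn.curv, map_sub]
  rw [J_D_ker hN A (J_D_J hN B C), J_D_ker hN B (J_D_J hN A C), J_D_J hN ⁅A, B⁆ C]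
  simp

end ChernProof

/-- The hv-curvature `P*` of the Chern connection satisfies
`P*(X,Y)Z = P*(Z,Y)X` for all vector fields `X, Y, Z` on `TM`. -/
theorem chern_hv_symmetry (K : FinslerKG) (N : LinConn K.toKGSetting)
    (hN : K.ChernEq N) :
    ∀ X Y Z : K.VF, K.Pstar N X Y Z = K.Pstar N Z Y X := by
  intro X Y Z
  have hV4 : K.J (N.tor (K.h X) (K.J Y)) = 0 := by
    rw [tor_h_J hN]; exact K.Ct'_sb1 X Y
  have z1 : K.J (N.D (K.h X) (N.tor (K.J Y) (K.h Z))) = 0 :=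
    J_D_ker hN _ (J_tor_ker_h hN Z (K.J_sq Y))
  have z2 : K.J (N.tor (N.D (K.h X) (K.J Y)) (K.h Z)) = 0 :=
    J_tor_ker_h hN Z (J_D_J hN (K.h X) Y)
  have z3 : K.J (N.tor (K.J Y) (K.h ⁅N.D (K.h X) (K.J Z), K.S⁆)) = 0 :=
    J_tor_ker_h hN _ (K.J_sq Y)
  have z4 : K.J (N.tor (N.tor (K.h X) (K.J Y)) (K.h Z)) = 0 :=
    J_tor_ker_h hN Z hV4
  have z5 : K.J (N.D (K.J Y) (N.tor (K.h Z) (K.h X))) = 0 :=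
    J_D_ker hN _ (J_tor_h_h hN Z X)
  have z6 : K.J (N.tor (K.h ⁅N.D (K.J Y) (K.J Z), K.S⁆) (K.h X)) = 0 :=
    J_tor_h_h hN _ X
  have z7 : K.J (N.tor (K.h Z) (K.h ⁅N.D (K.J Y) (K.J X), K.S⁆)) = 0 :=
    J_tor_h_h hN Z _
  have z8 : K.J (N.tor (N.tor (K.J Y) (K.h Z)) (K.h X)) = 0 :=
    J_tor_ker_h hN X (J_tor_ker_h hN Z (K.J_sq Y))
  have z9 : K.J (N.D (K.h Z) (N.tor (K.h X) (K.J Y))) = 0 :=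
    J_D_ker hN _ hV4
  have z10 : K.J (N.tor (K.h ⁅N.D (K.h Z) (K.J X), K.S⁆) (K.J Y)) = 0 := by
    rw [tor_h_J hN]; exact K.Ct'_sb1 _ _
  have z11 : K.J (N.tor (K.h X) (N.D (K.h Z) (K.J Y))) = 0 :=
    J_tor_h_ker hN X (J_D_J hN (K.h Z) Y)
  have z12 : N.tor (N.tor (K.h Z) (K.h X)) (K.J Y) = 0 :=
    tor_ker_J hN (J_tor_h_h hN Z X) Y
  have hbJ := congrArg K.J (bianchi N (K.h X) (K.J Y) (K.h Z))
  rw [D_h_form hN (K.h X) Z, D_h_form hN (K.J Y) Z, D_h_form hN (K.J Y) X,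
      D_h_form hN (K.h Z) X, z12] at hbJ
  simp only [map_add, map_sub] at hbJ
  rw [z1, z2, z3, z4, z5, z6, z7, z8, z9, z10, z11, map_zero] at hbJ
  simp only [add_zero, zero_add, sub_zero, zero_sub, neg_zero] at hbJ
  rw [J_curv_J hN (K.h Z) (K.h X) Y, add_zero, curv_swap (K.h Z) (K.J Y) (K.h X),
      map_neg] at hbJ
  have hkey : K.J (N.curv (K.h X) (K.J Y) (K.h Z)) =
      K.J (N.curv (K.h Z) (K.J Y) (K.h X)) := by
    rw [← sub_eq_add_neg] at hbJ
    exact sub_eq_zero.mp hbJ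
  have e1 : K.Pstar N X Y Z = K.J (N.curv (K.h X) (K.J Y) (K.h Z)) := by
    have hJ0 : K.J (K.Pstar N X Y Z) = 0 := by
      simp only [FinslerKG.Pstar]; exact J_curv_J hN _ _ Z
    have h2 := JF_ker hJ0
    have h3 : K.F (K.Pstar N X Y Z) = N.curv (K.h X) (K.J Y) (K.h Z) := by
      simp only [FinslerKG.Pstar]
      rw [← K.FJ Z, curv_F hN]
    rw [← h2, h3]
  have e2 : K.Pstar N Z Y X = K.J (N.curv (K.h Z) (K.J Y) (K.h X)) := by
    have hJ0 : K.J (K.Pstar N Z Y X) = 0 := by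
      simp only [FinslerKG.Pstar]; exact J_curv_J hN _ _ X
    have h2 := JF_ker hJ0
    have h3 : K.F (K.Pstar N Z Y X) = N.curv (K.h Z) (K.J Y) (K.h X) := by
      simp only [FinslerKG.Pstar]
      rw [← K.FJ X, curv_F hN]
    rw [← h2, h3]
  rw [e1, e2, hkey]
end

section
/- For any linear connection ∇ with torsion T and curvature K on a manifold, the first and second Bianchi identities hold: 𝔖_{X,Y,Z}{K(X,Y)Z} = 𝔖_{X,Y,Z}{T(T(X,Y),Z) + (∇_X T)(Y,Z)} and 𝔖_{X,Y,Z}{K(T(X,Y),Z) + (∇_X K)(Y,Z)} = 0. -/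
section Aux

variable {K : KGSetting} (N : LinConn K)

lemma LinConn.subX (X X' Y : K.VF) : N.D (X - X') Y = N.D X Y - N.D X' Y := by
  have h := N.addX (X - X') X' Y
  rw [sub_add_cancel] at h
  rw [h]; abel

lemma LinConn.negX (X Y : K.VF) : N.D (-X) Y = -N.D X Y := by
  have h := N.subX 0 X Y
  have h0 : N.D (0 : K.VF) Y = 0 := by
    have := N.subX X X Y; simpa using this
  simpa [h0] using h

lemma LinConn.subY (X Y Y' : K.VF) : N.D X (Y - Y') = N.D X Y - N.D X Y' := by
  have h := N.addY X (Y - Y') Y'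
  rw [sub_add_cancel] at h
  rw [h]; abel

end Aux

/-- For any linear connection `∇` with torsion `T` and
curvature `K` on a manifold, the first and second Bianchi identities hold:
`𝔖{K(X,Y)Z} = 𝔖{T(T(X,Y),Z) + (∇_X T)(Y,Z)}` and
`𝔖{K(T(X,Y),Z) + (∇_X K)(Y,Z)} = 0`. -/
theorem bianchi_identities (K : KGSetting) (N : LinConn K) :
    (∀ X Y Z : K.VF,
      N.curv X Y Z + N.curv Y Z X + N.curv Z X Y =
        (N.tor (N.tor X Y) Z +
          (N.D X (N.tor Y Z) - N.tor (N.D X Y) Z - N.tor Y (N.D X Z))) +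
        (N.tor (N.tor Y Z) X +
          (N.D Y (N.tor Z X) - N.tor (N.D Y Z) X - N.tor Z (N.D Y X))) +
        (N.tor (N.tor Z X) Y +
          (N.D Z (N.tor X Y) - N.tor (N.D Z X) Y - N.tor X (N.D Z Y)))) ∧
    (∀ X Y Z W : K.VF,
      (N.curv (N.tor X Y) Z W +
        (N.D X (N.curv Y Z W) - N.curv (N.D X Y) Z W - N.curv Y (N.D X Z) W -
          N.curv Y Z (N.D X W))) +
      (N.curv (N.tor Y Z) X W +
        (N.D Y (N.curv Z X W) - N.curv (N.D Y Z) X W - N.curv Z (N.D Y X) W -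
          N.curv Z X (N.D Y W))) +
      (N.curv (N.tor Z X) Y W +
        (N.D Z (N.curv X Y W) - N.curv (N.D Z X) Y W - N.curv X (N.D Z Y) W -
          N.curv X Y (N.D Z W))) = 0) := by
  have sk : ∀ a b : K.VF, ⁅b, a⁆ = -⁅a, b⁆ := fun a b => by rw [← lie_skew]
  constructor
  · intro X Y Z
    simp only [LinConn.curv, LinConn.tor, N.subX, N.subY, N.negX, sub_lie, lie_sub,
      sk X Y, sk X Z, sk Y Z, sk (N.D Y X) Z, sk (N.D X Z) Y, sk (N.D Z Y) X,
      sk ⁅X, Y⁆ Z, lie_neg, neg_lie, neg_neg, lie_lie]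
    abel
  · intro X Y Z W
    simp only [LinConn.curv, LinConn.tor, N.subX, N.subY, N.negX, sub_lie, lie_sub,
      sk X Y, sk X Z, sk Y Z, sk (N.D Y X) Z, sk (N.D X Z) Y, sk (N.D Z Y) X,
      sk ⁅X, Y⁆ Z, lie_neg, neg_lie, neg_neg, lie_lie]
    abel
end
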